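/- Let μ be an L-subgroup of G and η an L-subgroup of μ. Suppose there exists a finite ascending chain of L-subgroups η = θ₀ ⊆ θ₁ ⊆ … ⊆ θ_n = μ with each θᵢ normal in θ_{i+1}. Then the normal closure series of η in μ terminates at η in finitely many steps (η is subnormal in μ), and conversely. -/

import Mathlib

open scoped Classical

section Defs

variable {G : Type*} [Group G] {L : Type*} [CompletelyDistribLattice L]

/-- `μ` is an `L`-subgroup of the group `G`. -/
def IsLSubgroup (μ : G → L) : Prop :=
  (∀ x y : G, μ x ⊓ μ y ≤ μ (x * y)) ∧ (∀ x : G, μ x⁻¹ = μ x)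

/-- The conjugate `η^{a_z}` of `η` by the `L`-point `a_z`. -/
def LConj (η : G → L) (a : L) (z : G) : G → L :=
  fun x => a ⊓ η (z * x * z⁻¹)

/-- The `L`-subgroup generated by the `L`-subset `η`. -/
def LGen (η : G → L) : G → L :=
  fun x => ⨅ θ ∈ {θ : G → L | IsLSubgroup θ ∧ η ≤ θ}, θ x

/-- `η` is a pronormal `L`-subgroup of `μ`. -/
def IsLPronormal (μ η : G → L) : Prop :=
  IsLSubgroup η ∧ η ≤ μ ∧
    ∀ (a : L) (x : G), a ≤ μ x →
      ∃ (b : L) (y : G), b ≤ LGen (η ⊔ LConj η a x) y ∧ LConj η b y = LConj η a x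

/-- `η` is a normal `L`-subgroup of `μ`. -/
def IsLNormal (μ η : G → L) : Prop :=
  IsLSubgroup η ∧ η ≤ μ ∧ ∀ x y : G, η x ⊓ μ y ≤ η (y * x * y⁻¹)

/-- Set product of two `L`-subsets. -/
def LSetProd (η ν : G → L) : G → L :=
  fun x => ⨆ y : G, ⨆ z : G, ⨆ _ : y * z = x, η y ⊓ ν z

/-- The normalizer `N(η)` of `η` in `μ`. -/
def LNormalizer (μ η : G → L) : G → L :=
  fun z => sSup {a : L | a ≤ μ z ∧ LConj η a z ≤ η}

/-- The conjugate `μημ⁻¹` of `η` in `μ`. -/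
def LConjAll (μ η : G → L) : G → L :=
  fun x => ⨆ z : G, ⨆ y : G, ⨆ _ : x = z * y * z⁻¹, η y ⊓ μ z

/-- The normal closure `η^μ` of `η` in `μ`. -/
def LNormalClosure (μ η : G → L) : G → L := LGen (LConjAll μ η)

/-- The normal closure series `η₀ = μ`, `ηᵢ₊₁ = η^{ηᵢ}`. -/
def LNcSeries (μ η : G → L) : ℕ → (G → L)
  | 0 => μ
  | n + 1 => LNormalClosure (LNcSeries μ η n) η

/-- `η` is a subnormal `L`-subgroup of `μ`. -/
def IsLSubnormal (μ η : G → L) : Prop := ∃ m : ℕ, LNcSeries μ η m = η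

/-- The commutator `(η, θ)` of two `L`-subsets. -/
noncomputable def LCommFun (η θ : G → L) : G → L :=
  fun x =>
    if ∃ y z : G, x = y * z * y⁻¹ * z⁻¹ then
      ⨆ y : G, ⨆ z : G, ⨆ _ : x = y * z * y⁻¹ * z⁻¹, η y ⊓ θ z
    else (⨅ g : G, η g) ⊓ (⨅ g : G, θ g)

/-- The descending central chain `Z₀(μ) = μ`, `Zᵢ₊₁(μ) = [Zᵢ(μ), μ]`. -/
noncomputable def LDcc (μ : G → L) : ℕ → (G → L)
  | 0 => μ
  | n + 1 => LGen (LCommFun (LDcc μ n) μ)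

/-- The trivial `L`-subgroup with the same tip and tail as `μ`. -/
noncomputable def LTrivial (μ : G → L) : G → L :=
  fun x => if x = 1 then μ 1 else ⨅ g : G, μ g

/-- `μ` is a nilpotent `L`-group. -/
def IsLNilpotent (μ : G → L) : Prop := ∃ n : ℕ, LDcc μ n = LTrivial μ

/-- Sup-property of an `L`-subset. -/
def SupProp (μ : G → L) : Prop :=
  ∀ A : Set G, A.Nonempty → ∃ a ∈ A, μ a = ⨆ x ∈ A, μ x

end Defs

/-- Image of an `L`-subset under a map. -/
def LImage {G H L : Type*} [CompleteLattice L] (f : G → H) (μ : G → L) : H → L :=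
  fun y => ⨆ x : G, ⨆ _ : f x = y, μ x

section AuxProofs

variable {G : Type*} [Group G] {L : Type*} [CompletelyDistribLattice L]

/-- Symmetrization of an `L`-subset. -/
private def nsym (ν : G → L) : G → L := fun g => ν g ⊔ ν g⁻¹

/-- Word-description of the generated `L`-subgroup. -/
private def Wgen (ν : G → L) : G → L :=
  fun x => ⨆ l : List G, ⨆ _ : l ≠ [] ∧ l.prod = x, ⨅ g ∈ l, nsym ν g

private lemma lgen_le {ν θ : G → L} (hθ : IsLSubgroup θ) (h : ν ≤ θ) : LGen ν ≤ θ :=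
  fun x => iInf₂_le θ ⟨hθ, h⟩

private lemma le_lgen (ν : G → L) : ν ≤ LGen ν :=
  fun x => le_iInf₂ fun _ hθ => hθ.2 x

private lemma le_nsym (ν : G → L) : ν ≤ nsym ν := fun _ => le_sup_left

private lemma nsym_le {ν θ : G → L} (hθ : IsLSubgroup θ) (h : ν ≤ θ) : nsym ν ≤ θ :=
  fun g => sup_le (h g) ((h g⁻¹).trans (hθ.2 g).le)

private lemma nsym_inv (ν : G → L) (g : G) : nsym ν g⁻¹ = nsym ν g := by
  simp [nsym, sup_comm]

private lemma inf_word_le {ν θ : G → L} (hθ : IsLSubgroup θ) (h : ν ≤ θ) :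
    ∀ l : List G, l ≠ [] → (⨅ g ∈ l, nsym ν g) ≤ θ l.prod := by
  intro l
  induction l with
  | nil => simp
  | cons a t ih =>
    intro _
    have hA : (⨅ g ∈ a :: t, nsym ν g) ≤ nsym ν a := iInf₂_le a List.mem_cons_self
    rcases eq_or_ne t [] with rfl | ht
    · simpa using hA.trans (nsym_le hθ h a)
    · have hB : (⨅ g ∈ a :: t, nsym ν g) ≤ ⨅ g ∈ t, nsym ν g :=
        le_iInf₂ fun g hg => iInf₂_le g (List.mem_cons_of_mem a hg)
      calc (⨅ g ∈ a :: t, nsym ν g) ≤ θ a ⊓ θ t.prod :=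
            le_inf (hA.trans (nsym_le hθ h a)) (hB.trans (ih ht))
        _ ≤ θ (a * t.prod) := hθ.1 a t.prod
        _ = θ (a :: t).prod := by rw [List.prod_cons]

private lemma wgen_le {ν θ : G → L} (hθ : IsLSubgroup θ) (h : ν ≤ θ) : Wgen ν ≤ θ := by
  intro x
  refine iSup₂_le fun l hl => ?_
  rw [← hl.2]
  exact inf_word_le hθ h l hl.1

private lemma le_wgen (ν : G → L) : ν ≤ Wgen ν := by
  intro x
  have h1 : ν x ≤ ⨅ g ∈ [x], nsym ν g := by
    refine le_iInf₂ fun g hg => ?_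
    simp only [List.mem_singleton] at hg
    rw [hg]
    exact le_nsym ν x
  exact h1.trans (le_iSup₂_of_le [x] ⟨by simp, by simp⟩ le_rfl)

private lemma wgen_subgroup (ν : G → L) : IsLSubgroup (Wgen ν) := by
  constructor
  · intro x y
    simp only [Wgen, iSup_inf_eq, inf_iSup_eq]
    refine iSup_le fun l1 => iSup_le fun h1 => iSup_le fun l2 => iSup_le fun h2 => ?_
    refine le_iSup₂_of_le (l2 ++ l1)
      ⟨by simp [h2.1], by rw [List.prod_append, h2.2, h1.2]⟩ ?_
    refine le_iInf₂ fun g hg => ?_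
    rcases List.mem_append.1 hg with hg | hg
    · exact inf_le_left.trans (iInf₂_le g hg)
    · exact inf_le_right.trans (iInf₂_le g hg)
  · have aux : ∀ x : G, Wgen ν x ≤ Wgen ν x⁻¹ := by
      intro x
      refine iSup₂_le fun l hl => ?_
      refine le_iSup₂_of_le ((l.map fun g => g⁻¹).reverse)
        ⟨by simp [hl.1], by rw [← List.prod_inv_reverse, hl.2]⟩ ?_
      refine le_iInf₂ fun g hg => ?_
      simp only [List.mem_reverse, List.mem_map] at hg
      rcases hg with ⟨a, ha, rfl⟩
      exact (iInf₂_le a ha).trans (nsym_inv ν a).ge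
    exact fun x => le_antisymm (by simpa using aux x⁻¹) (aux x)

private lemma lgen_eq_wgen (ν : G → L) : LGen ν = Wgen ν :=
  le_antisymm (lgen_le (wgen_subgroup ν) (le_wgen ν))
    (fun x => le_iInf₂ fun θ hθ => wgen_le hθ.1 hθ.2 x)

private lemma lgen_subgroup (ν : G → L) : IsLSubgroup (LGen ν) := by
  rw [lgen_eq_wgen]; exact wgen_subgroup ν

private lemma subgroup_le_one {μ : G → L} (hμ : IsLSubgroup μ) (x : G) : μ x ≤ μ 1 := by
  have h := hμ.1 x x⁻¹
  rw [hμ.2, inf_idem, mul_inv_cancel] at h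
  exact h

private lemma lconjall_le {μ η : G → L} (hμ : IsLSubgroup μ) (h : η ≤ μ) :
    LConjAll μ η ≤ μ := by
  intro x
  refine iSup_le fun z => iSup_le fun y => iSup_le fun hxy => ?_
  subst hxy
  calc η y ⊓ μ z ≤ (μ z ⊓ μ y) ⊓ μ z :=
        le_inf (le_inf inf_le_right (inf_le_left.trans (h y))) inf_le_right
    _ ≤ μ (z * y) ⊓ μ z⁻¹ := by rw [hμ.2]; exact inf_le_inf_right _ (hμ.1 z y)
    _ ≤ μ (z * y * z⁻¹) := hμ.1 _ _

private lemma le_lconjall {μ η : G → L} (hμ : IsLSubgroup μ) (h : η ≤ μ) :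
    η ≤ LConjAll μ η := by
  intro x
  have h1 : η x ≤ η x ⊓ μ 1 := le_inf le_rfl ((h x).trans (subgroup_le_one hμ x))
  refine h1.trans ?_
  exact le_iSup_of_le 1 (le_iSup_of_le x (le_iSup_of_le (by group) le_rfl))

private lemma lconjall_conj {μ η : G → L} (hμ : IsLSubgroup μ) (x y : G) :
    LConjAll μ η x ⊓ μ y ≤ LConjAll μ η (y * x * y⁻¹) := by
  simp only [LConjAll, iSup_inf_eq]
  refine iSup_le fun z => iSup_le fun w => iSup_le fun hx => ?_
  subst hx
  refine le_iSup_of_le (y * z) (le_iSup_of_le w (le_iSup_of_le (by group) ?_))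
  exact le_inf (inf_le_left.trans inf_le_left)
    ((le_inf inf_le_right (inf_le_left.trans inf_le_right)).trans (hμ.1 y z))

private lemma nsym_lconjall_conj {μ η : G → L} (hμ : IsLSubgroup μ) (x y : G) :
    nsym (LConjAll μ η) x ⊓ μ y ≤ nsym (LConjAll μ η) (y * x * y⁻¹) := by
  have hinv : (y * x * y⁻¹)⁻¹ = y * x⁻¹ * y⁻¹ := by group
  simp only [nsym, hinv, inf_sup_right]
  exact sup_le_sup (lconjall_conj hμ x y) (lconjall_conj hμ x⁻¹ y)

private lemma wgen_conj {μ η : G → L} (hμ : IsLSubgroup μ) (x y : G) :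
    Wgen (LConjAll μ η) x ⊓ μ y ≤ Wgen (LConjAll μ η) (y * x * y⁻¹) := by
  simp only [Wgen, iSup_inf_eq]
  have hprod : ∀ l : List G, (l.map fun g => y * g * y⁻¹).prod = y * l.prod * y⁻¹ := by
    intro l
    induction l with
    | nil => simp
    | cons a t ih => rw [List.map_cons, List.prod_cons, ih, List.prod_cons]; group
  refine iSup_le fun l => iSup_le fun hl => ?_
  refine le_iSup₂_of_le (l.map fun g => y * g * y⁻¹)
    ⟨by simp [hl.1], by rw [hprod, hl.2]⟩ ?_
  refine le_iInf₂ fun g hg => ?_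
  rcases List.mem_map.1 hg with ⟨a, ha, rfl⟩
  exact (inf_le_inf_right _ (iInf₂_le a ha)).trans (nsym_lconjall_conj hμ a y)

private lemma normalClosure_le {μ η : G → L} (hμ : IsLSubgroup μ) (h : η ≤ μ) :
    LNormalClosure μ η ≤ μ :=
  lgen_le hμ (lconjall_le hμ h)

private lemma le_normalClosure {μ η : G → L} (hμ : IsLSubgroup μ) (h : η ≤ μ) :
    η ≤ LNormalClosure μ η :=
  (le_lconjall hμ h).trans (le_lgen _)

private lemma normalClosure_normal {μ η : G → L} (hμ : IsLSubgroup μ) (h : η ≤ μ) :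
    IsLNormal μ (LNormalClosure μ η) := by
  refine ⟨lgen_subgroup _, normalClosure_le hμ h, ?_⟩
  intro x y
  have heq : LNormalClosure μ η = Wgen (LConjAll μ η) := lgen_eq_wgen _
  rw [heq]
  exact wgen_conj hμ x y

private lemma ncseries_subgroup {μ η : G → L} (hμ : IsLSubgroup μ) :
    ∀ m, IsLSubgroup (LNcSeries μ η m)
  | 0 => hμ
  | (_ + 1) => lgen_subgroup _

private lemma le_ncseries {μ η : G → L} (hμ : IsLSubgroup μ) (hle : η ≤ μ) :
    ∀ m, η ≤ LNcSeries μ η m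
  | 0 => hle
  | (m + 1) => le_normalClosure (ncseries_subgroup hμ m) (le_ncseries hμ hle m)

end AuxProofs

theorem stmt18 {G : Type*} [Group G] {L : Type*} [CompletelyDistribLattice L]
    (μ η : G → L) (hμ : IsLSubgroup μ) (hη : IsLSubgroup η) (hle : η ≤ μ) :
    (∃ (n : ℕ) (θ : ℕ → (G → L)), θ 0 = η ∧ θ n = μ ∧
        ∀ i < n, IsLNormal (θ (i + 1)) (θ i)) ↔
      IsLSubnormal μ η := by
  constructor
  · rintro ⟨n, θ, h0, hn, hstep⟩
    have hmono : ∀ i < n, θ i ≤ θ (i + 1) := fun i hi => (hstep i hi).2.1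
    have hηle : ∀ i, i ≤ n → η ≤ θ i := by
      intro i
      induction i with
      | zero => exact fun _ => h0 ▸ le_rfl
      | succ k ih => exact fun hk => (ih (Nat.le_of_succ_le hk)).trans (hmono k hk)
    have key : ∀ i, i ≤ n → LNcSeries μ η i ≤ θ (n - i) := by
      intro i
      induction i with
      | zero =>
        intro _
        show μ ≤ θ (n - 0)
        rw [Nat.sub_zero, hn]
      | succ k ih =>
        intro hk
        have hk' : k ≤ n := Nat.le_of_succ_le hk
        have hkn : n - k = (n - (k + 1)) + 1 := by omega
        have hnorm : IsLNormal (θ (n - k)) (θ (n - (k + 1))) := by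
          have h := hstep (n - (k + 1)) (by omega)
          rwa [← hkn] at h
        show LGen (LConjAll (LNcSeries μ η k) η) ≤ θ (n - (k + 1))
        refine lgen_le hnorm.1 ?_
        intro x
        refine iSup_le fun z => iSup_le fun w => iSup_le fun hx => ?_
        subst hx
        calc η w ⊓ LNcSeries μ η k z ≤ θ (n - (k + 1)) w ⊓ θ (n - k) z :=
              inf_le_inf (hηle _ (by omega) w) (ih hk' z)
          _ ≤ θ (n - (k + 1)) (z * w * z⁻¹) := hnorm.2.2 w z
    refine ⟨n, le_antisymm ?_ (le_ncseries hμ hle n)⟩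
    have h := key n le_rfl
    rwa [Nat.sub_self, h0] at h
  · rintro ⟨m, hm⟩
    refine ⟨m, fun i => LNcSeries μ η (m - i),
      by show LNcSeries μ η (m - 0) = η; rw [Nat.sub_zero, hm],
      by show LNcSeries μ η (m - m) = μ; rw [Nat.sub_self]; rfl, ?_⟩
    intro i hi
    show IsLNormal (LNcSeries μ η (m - (i + 1))) (LNcSeries μ η (m - i))
    have h1 : m - i = (m - (i + 1)) + 1 := by omega
    rw [h1]
    exact normalClosure_normal (ncseries_subgroup hμ _) (le_ncseries hμ hle _)
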